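/- arXiv:2409.12290 — 6 statements merged into one kernel-verified Lean document; each statement's English description precedes it below -/
import Mathlib

section
/- Let J : ℝⁿ → ℝ be continuously differentiable, coercive (J(θ) → ∞ as ‖θ‖ → ∞), with a unique global minimizer θ* (J(θ*) < J(θ) for all θ ≠ θ*) and ∇J(θ) = 0 if and only if θ = θ*. Define V_θ(e) = J(e + θ*) − J(θ*). Then for every c ≥ 0 the sublevel set {e ∈ ℝⁿ : V_θ(e) ≤ c} is connected. -/
open Set

/-- For a `C¹`, coercive cost `J` with unique global minimizer `θ*` whose
gradient vanishes only at `θ*`, every sublevel set of `V_θ(e) = J(e + θ*) - J(θ*)`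
(for `c ≥ 0`) is connected. -/
theorem sublevel_sets_connected (n : ℕ)
    (J : EuclideanSpace ℝ (Fin n) → ℝ) (θs : EuclideanSpace ℝ (Fin n))
    (hJ : ContDiff ℝ 1 J)
    (hmin : ∀ θ, θ ≠ θs → J θs < J θ)
    (hgrad : ∀ θ, gradient J θ = 0 ↔ θ = θs)
    (hcoercive : ∀ M : ℝ, ∃ R : ℝ, ∀ θ : EuclideanSpace ℝ (Fin n), R ≤ ‖θ‖ → M ≤ J θ)
    (c : ℝ) (hc : 0 ≤ c) :
    IsConnected {e : EuclideanSpace ℝ (Fin n) | J (e + θs) - J θs ≤ c} := by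
  have hJc : Continuous J := hJ.continuous
  have hJd : Differentiable ℝ J := hJ.differentiable one_ne_zero
  set K : Set (EuclideanSpace ℝ (Fin n)) := {θ | J θ ≤ J θs + c} with hK
  -- K is closed
  have hKclosed : IsClosed K := isClosed_le hJc continuous_const
  -- K is bounded, hence compact
  have hKcompact : IsCompact K := by
    obtain ⟨R, hR⟩ := hcoercive (J θs + c + 1)
    have hbdd : Bornology.IsBounded K := by
      apply Bornology.IsBounded.subset (Metric.isBounded_closedBall (x := (0 : EuclideanSpace ℝ (Fin n))) (r := |R|))
      intro θ hθ
      simp only [Metric.mem_closedBall, dist_zero_right]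
      by_contra h
      push_neg at h
      have := hR θ (le_of_lt (lt_of_le_of_lt (le_abs_self R) h))
      have : J θs + c + 1 ≤ J θs + c := this.trans hθ
      linarith
    exact Metric.isCompact_of_isClosed_isBounded hKclosed hbdd
  have hθsK : θs ∈ K := by simp [hK]; linarith
  -- key lemma: cannot separate
  have key : ∀ U V : Set (EuclideanSpace ℝ (Fin n)), IsOpen U → IsOpen V →
      K ⊆ U ∪ V → (K ∩ (U ∩ V)) = ∅ → θs ∈ U → (K ∩ V).Nonempty → False := by
    intro U V hU hV hcov hdisj hθU ⟨b, hbK, hbV⟩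
    -- B = K ∩ V is compact
    have hBeq : K ∩ V = K \ U := by
      ext x
      constructor
      · rintro ⟨hxK, hxV⟩
        refine ⟨hxK, fun hxU => ?_⟩
        have : x ∈ K ∩ (U ∩ V) := ⟨hxK, hxU, hxV⟩
        rw [hdisj] at this; exact this
      · rintro ⟨hxK, hxU⟩
        rcases hcov hxK with h | h
        · exact absurd h hxU
        · exact ⟨hxK, h⟩
    have hBcompact : IsCompact (K ∩ V) := by
      rw [hBeq]
      exact hKcompact.of_isClosed_subset (hKclosed.sdiff hU) diff_subset
    obtain ⟨p, hpB, hpmin⟩ := hBcompact.exists_isMinOn ⟨b, hbK, hbV⟩ hJc.continuousOn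
    -- p is a local min of J
    have hploc : IsLocalMin J p := by
      have hVnhds : V ∈ nhds p := hV.mem_nhds hpB.2
      filter_upwards [hVnhds] with x hxV
      by_cases hxK : x ∈ K
      · exact hpmin ⟨hxK, hxV⟩
      · have : J θs + c < J x := not_le.mp hxK
        exact le_of_lt (lt_of_le_of_lt hpB.1 this)
    have hfd : fderiv ℝ J p = 0 := hploc.fderiv_eq_zero
    have hg : gradient J p = 0 := by rw [gradient, hfd, map_zero]
    have hpe : p = θs := (hgrad p).mp hg
    -- but p ∈ V, θs ∈ U, contradiction with disjointness
    have : p ∈ K ∩ (U ∩ V) := ⟨hpB.1, hpe ▸ hθU, hpB.2⟩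
    rw [hdisj] at this; exact this
  have hKconn : IsConnected K := by
    refine ⟨⟨θs, hθsK⟩, ?_⟩
    rw [isPreconnected_iff_subset_of_disjoint] at *
    intro U V hU hV hcov hdisj
    by_contra hcon
    push_neg at hcon
    obtain ⟨hnU, hnV⟩ := hcon
    have hKU : (K ∩ U).Nonempty := by
      rcases Set.not_subset.mp hnV with ⟨x, hxK, hxV⟩
      rcases hcov hxK with h | h
      · exact ⟨x, hxK, h⟩
      · exact absurd h hxV
    have hKV : (K ∩ V).Nonempty := by
      rcases Set.not_subset.mp hnU with ⟨x, hxK, hxU⟩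
      rcases hcov hxK with h | h
      · exact absurd h hxU
      · exact ⟨x, hxK, h⟩
    rcases hcov hθsK with hθU | hθV
    · exact key U V hU hV hcov hdisj hθU hKV
    · exact key V U hV hU (by rwa [Set.union_comm]) (by rwa [Set.inter_comm V U]) hθV hKU
  -- transfer via translation homeomorphism
  have hset : {e : EuclideanSpace ℝ (Fin n) | J (e + θs) - J θs ≤ c}
      = (Homeomorph.addRight θs) ⁻¹' K := by
    ext e
    simp only [mem_setOf_eq, mem_preimage, Homeomorph.coe_addRight, hK, mem_setOf_eq]
    constructor <;> intro h <;> linarith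
  rw [hset, Homeomorph.isConnected_preimage]
  exact hKconn
end

section
/- Let J : ℝⁿ → ℝ be continuously differentiable, let k > 0, ε > 0, and let η_1,…,η_n ≥ 0. Let g : ℝⁿ → ℝⁿ be a function satisfying |g_i(θ) − ∂J/∂θ_i(θ)| ≤ η_i for all θ ∈ ℝⁿ and all i. Suppose θ̄ : [0, ∞) → ℝⁿ and v̄ : [0, ∞) → [0, ∞)ⁿ are functions with θ̄ differentiable and (d/dt)θ̄_i(t) = −k g_i(θ̄(t)) / (√(v̄_i(t)) + ε) for all t ≥ 0 and all i. Then for all t ≥ 0, (d/dt) J(θ̄(t)) ≤ −k Σ_{i=1}^n ( (∂J/∂θ_i(θ̄(t)))² − η_i |∂J/∂θ_i(θ̄(t))| ) / (√(v̄_i(t)) + ε). -/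
/-- Along a normalized-gradient flow driven by gradient estimates `g` that
approximate the true partial derivatives within tolerances `η i`, the cost decreases at
the stated rate. -/
theorem cost_derivative_bound (n : ℕ)
    (J : EuclideanSpace ℝ (Fin n) → ℝ)
    (hJ : ContDiff ℝ 1 J)
    (k ε : ℝ) (hk : 0 < k) (hε : 0 < ε)
    (η : Fin n → ℝ) (hη : ∀ i, 0 ≤ η i)
    (g : EuclideanSpace ℝ (Fin n) → EuclideanSpace ℝ (Fin n))
    (hg : ∀ θ i, |g θ i - gradient J θ i| ≤ η i)
    (θb : ℝ → EuclideanSpace ℝ (Fin n)) (vb : ℝ → Fin n → ℝ)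
    (hvb : ∀ t, 0 ≤ t → ∀ i, 0 ≤ vb t i)
    (hode : ∀ t, 0 ≤ t → ∀ i,
      HasDerivAt (fun u => θb u i) (-k * g (θb t) i / (Real.sqrt (vb t i) + ε)) t) :
    ∀ t, 0 ≤ t →
      deriv (fun u => J (θb u)) t ≤
        -k * ∑ i, ((gradient J (θb t) i) ^ 2 - η i * |gradient J (θb t) i|) /
          (Real.sqrt (vb t i) + ε) := by
  intro t ht
  set w : EuclideanSpace ℝ (Fin n) :=
    (EuclideanSpace.equiv (Fin n) ℝ).symm
      (fun i => -k * g (θb t) i / (Real.sqrt (vb t i) + ε)) with hw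
  have hθ : HasDerivAt θb w t := by
    have hpi : HasDerivAt (fun u => (fun i => θb u i : Fin n → ℝ))
        (fun i => -k * g (θb t) i / (Real.sqrt (vb t i) + ε)) t :=
      hasDerivAt_pi.mpr (fun i => hode t ht i)
    exact ((EuclideanSpace.equiv (Fin n) ℝ).symm.toContinuousLinearMap.hasFDerivAt.comp_hasDerivAt
      t hpi)
  have hdiff : DifferentiableAt ℝ J (θb t) := (hJ.differentiable one_ne_zero).differentiableAt
  have hgrad : HasGradientAt J (gradient J (θb t)) (θb t) := hdiff.hasGradientAt
  have hd : HasDerivAt (fun u => J (θb u)) (inner ℝ (gradient J (θb t)) w : ℝ) t := by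
    have := hgrad.hasFDerivAt.comp_hasDerivAt t hθ
    exact this
  rw [hd.deriv]
  have hinner : (inner ℝ (gradient J (θb t)) w : ℝ)
      = ∑ i, gradient J (θb t) i * (-k * g (θb t) i / (Real.sqrt (vb t i) + ε)) := by
    rw [PiLp.inner_apply]
    simp [hw, RCLike.inner_apply, EuclideanSpace.equiv, mul_comm]
  rw [hinner, Finset.mul_sum]
  apply Finset.sum_le_sum
  intro i _
  have hden : 0 < Real.sqrt (vb t i) + ε := by positivity
  set G := gradient J (θb t) i
  have key : G ^ 2 - η i * |G| ≤ G * g (θb t) i := by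
    have h1 : G * g (θb t) i = G ^ 2 + G * (g (θb t) i - G) := by ring
    have h2 : -(η i * |G|) ≤ G * (g (θb t) i - G) := by
      have := abs_mul G (g (θb t) i - G)
      have h3 : |G * (g (θb t) i - G)| ≤ |G| * η i :=
        this ▸ mul_le_mul_of_nonneg_left (hg (θb t) i) (abs_nonneg G)
      nlinarith [neg_abs_le (G * (g (θb t) i - G))]
    linarith
  have h4 : -k * (G * g (θb t) i) ≤ -k * (G ^ 2 - η i * |G|) := by nlinarith
  calc gradient J (θb t) i * (-k * g (θb t) i / (Real.sqrt (vb t i) + ε))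
      = (-k * (G * g (θb t) i)) * (Real.sqrt (vb t i) + ε)⁻¹ := by ring
    _ ≤ (-k * (G ^ 2 - η i * |G|)) * (Real.sqrt (vb t i) + ε)⁻¹ :=
        mul_le_mul_of_nonneg_right h4 (by positivity)
    _ = -k * ((G ^ 2 - η i * |G|) / (Real.sqrt (vb t i) + ε)) := by ring
end

section
/- Let J : ℝⁿ → ℝ be continuously differentiable, coercive (J(θ) → ∞ as ‖θ‖ → ∞), with a unique global minimizer θ* (J(θ*) < J(θ) for all θ ≠ θ*) and ∇J(θ) = 0 if and only if θ = θ*. Fix k > 0, ε > 0, c > 0, and V ≥ 0. Then there exists η > 0 such that the following holds: for every continuous g : ℝⁿ → ℝⁿ satisfying |g_i(θ) − ∂J/∂θ_i(θ)| ≤ η for all i and all θ in the sublevel set S_c = {θ : J(θ) − J(θ*) ≤ c}, and for every pair of functions θ̄ : [0, ∞) → ℝⁿ differentiable and v̄ : [0, ∞) → [0, V]ⁿ with (d/dt)θ̄_i(t) = −k g_i(θ̄(t)) / (√(v̄_i(t)) + ε) for all t ≥ 0 and all i, if θ̄(0) ∈ S_c then θ̄(t) ∈ S_c for all t ≥ 0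 (the sublevel set S_c is forward invariant). -/
open Filter Topology InnerProductSpace

private lemma aux_fderiv_eq {n : ℕ} (J : EuclideanSpace ℝ (Fin n) → ℝ)
    (x v : EuclideanSpace ℝ (Fin n)) :
    fderiv ℝ J x v = ∑ i, gradient J x i * v i := by
  have h : fderiv ℝ J x = toDual ℝ _ (gradient J x) :=
    ((InnerProductSpace.toDual ℝ _).apply_symm_apply _).symm
  rw [h, toDual_apply_apply]
  simp only [PiLp.inner_apply, RCLike.inner_apply, conj_trivial, mul_comm]

private lemma aux_coord {n : ℕ} (x : EuclideanSpace ℝ (Fin n)) (i : Fin n) : |x i| ≤ ‖x‖ := by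
  rw [EuclideanSpace.norm_eq, ← Real.sqrt_sq_eq_abs]
  apply Real.sqrt_le_sqrt
  simp only [Real.norm_eq_abs, sq_abs]
  exact Finset.single_le_sum (f := fun j => x j ^ 2) (fun j _ => sq_nonneg _) (Finset.mem_univ i)

private lemma aux_sumsq {n : ℕ} (x : EuclideanSpace ℝ (Fin n)) : ∑ i, x i ^ 2 = ‖x‖ ^ 2 := by
  rw [EuclideanSpace.norm_eq, Real.sq_sqrt (by positivity)]
  simp [sq_abs]

private lemma aux_decrease (f : ℝ → ℝ) (d t₁ T : ℝ) (hd : HasDerivAt f d t₁) (hneg : d < 0)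
    (hT : t₁ < T) : ∃ u, t₁ < u ∧ u < T ∧ f u < f t₁ := by
  have hs : Filter.Tendsto (slope f t₁) (𝓝[>] t₁) (𝓝 d) :=
    (hasDerivAt_iff_tendsto_slope.1 hd).mono_left
      (nhdsWithin_mono _ fun x hx => ne_of_gt hx)
  have h1 : ∀ᶠ u in 𝓝[>] t₁, slope f t₁ u < 0 := hs.eventually_lt_const hneg
  have h2 : Set.Ioo t₁ T ∈ 𝓝[>] t₁ := Ioo_mem_nhdsGT_of_mem ⟨le_rfl, hT⟩
  obtain ⟨u, hu1, hu2⟩ := (h1.and (eventually_of_mem h2 fun x hx => hx)).exists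
  refine ⟨u, hu2.1, hu2.2, ?_⟩
  rw [slope_def_field] at hu1
  rcases div_neg_iff.1 hu1 with ⟨h, h'⟩ | ⟨h, h'⟩ <;> linarith [sub_pos.2 hu2.1]

private lemma aux_hasDerivAt_coords {n : ℕ} (θb : ℝ → EuclideanSpace ℝ (Fin n))
    (d : Fin n → ℝ) (u : ℝ) (h : ∀ i, HasDerivAt (fun s => θb s i) (d i) u) :
    HasDerivAt θb ((EuclideanSpace.equiv (Fin n) ℝ).symm d) u := by
  have hpi : HasDerivAt (fun s => (EuclideanSpace.equiv (Fin n) ℝ) (θb s)) d u :=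
    hasDerivAt_pi.2 h
  have := ((EuclideanSpace.equiv (Fin n) ℝ).symm :
    (Fin n → ℝ) →L[ℝ] EuclideanSpace ℝ (Fin n)).hasFDerivAt.comp_hasDerivAt u hpi
  exact this.congr_of_eventuallyEq (Filter.Eventually.of_forall fun s => by simp)

/-- Forward invariance of sublevel sets of the normalized-gradient flow
with sufficiently accurate gradient estimates and filter states confined to `[0, V]`. -/
theorem sublevel_forward_invariant (n : ℕ)
    (J : EuclideanSpace ℝ (Fin n) → ℝ) (θs : EuclideanSpace ℝ (Fin n))
    (hJ : ContDiff ℝ 1 J)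
    (hmin : ∀ θ, θ ≠ θs → J θs < J θ)
    (hgrad : ∀ θ, gradient J θ = 0 ↔ θ = θs)
    (hcoercive : ∀ M : ℝ, ∃ R : ℝ, ∀ θ : EuclideanSpace ℝ (Fin n), R ≤ ‖θ‖ → M ≤ J θ)
    (k ε c V : ℝ) (hk : 0 < k) (hε : 0 < ε) (hc : 0 < c) (hV : 0 ≤ V) :
    ∃ η : ℝ, 0 < η ∧
      ∀ g : EuclideanSpace ℝ (Fin n) → EuclideanSpace ℝ (Fin n), Continuous g →
        (∀ θ : EuclideanSpace ℝ (Fin n), J θ - J θs ≤ c →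
          ∀ i, |g θ i - gradient J θ i| ≤ η) →
        ∀ (θb : ℝ → EuclideanSpace ℝ (Fin n)) (vb : ℝ → Fin n → ℝ),
          (∀ t, 0 ≤ t → ∀ i, 0 ≤ vb t i ∧ vb t i ≤ V) →
          (∀ t, 0 ≤ t → ∀ i,
            HasDerivAt (fun u => θb u i) (-k * g (θb t) i / (Real.sqrt (vb t i) + ε)) t) →
          J (θb 0) - J θs ≤ c →
          ∀ t, 0 ≤ t → J (θb t) - J θs ≤ c := by
  have hJc : Continuous J := hJ.continuous
  have hgc : Continuous (gradient J) :=
    (InnerProductSpace.toDual ℝ _).symm.continuous.comp (hJ.continuous_fderiv one_ne_zero)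
  -- compactness of the sublevel set
  have hScl : IsClosed {θ : EuclideanSpace ℝ (Fin n) | J θ - J θs ≤ c} :=
    isClosed_le (hJc.sub continuous_const) continuous_const
  have hScpt : IsCompact {θ : EuclideanSpace ℝ (Fin n) | J θ - J θs ≤ c} := by
    obtain ⟨R, hR⟩ := hcoercive (J θs + c + 1)
    apply Metric.isCompact_of_isClosed_isBounded hScl
    apply (Metric.isBounded_closedBall (x := (0 : EuclideanSpace ℝ (Fin n))) (r := |R|)).subset
    intro θ hθ
    simp only [Metric.mem_closedBall, dist_zero_right]
    by_contra hlt
    push_neg at hlt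
    have := hR θ (le_trans (le_abs_self R) hlt.le)
    simp only [Set.mem_setOf_eq] at hθ
    linarith
  -- upper bound G on the gradient norm over the sublevel set
  have hSne : θs ∈ {θ : EuclideanSpace ℝ (Fin n) | J θ - J θs ≤ c} := by
    simp only [Set.mem_setOf_eq]; linarith
  obtain ⟨θG, _, hGmax⟩ := hScpt.exists_isMaxOn ⟨θs, hSne⟩ (hgc.norm.continuousOn)
  set G := ‖gradient J θG‖ with hGdef
  have hG0 : 0 ≤ G := norm_nonneg _
  have hGb : ∀ θ, J θ - J θs ≤ c → ‖gradient J θ‖ ≤ G := fun θ hθ => hGmax hθ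
  -- lower bound δ on the gradient norm over the level set
  obtain ⟨δ, hδ0, hδ⟩ : ∃ δ : ℝ, 0 < δ ∧
      ∀ θ, J θ - J θs = c → δ ≤ ‖gradient J θ‖ := by
    by_cases hLne : {θ : EuclideanSpace ℝ (Fin n) | J θ - J θs = c}.Nonempty
    · have hLcpt : IsCompact {θ : EuclideanSpace ℝ (Fin n) | J θ - J θs = c} :=
        hScpt.of_isClosed_subset (isClosed_eq (hJc.sub continuous_const) continuous_const)
          (fun θ hθ => le_of_eq hθ)
      obtain ⟨θ₀, hθ₀, hmin'⟩ := hLcpt.exists_isMinOn hLne (hgc.norm.continuousOn)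
      refine ⟨‖gradient J θ₀‖, ?_, fun θ hθ => hmin' hθ⟩
      rw [norm_pos_iff]
      intro h0
      have h1 := (hgrad θ₀).1 h0
      rw [h1] at hθ₀
      simp only [Set.mem_setOf_eq, sub_self] at hθ₀
      linarith
    · exact ⟨1, one_pos, fun θ hθ => absurd ⟨θ, hθ⟩ hLne⟩
  set B := Real.sqrt V + ε with hBdef
  have hB : 0 < B := by positivity
  set η := δ ^ 2 * ε / (2 * B * (n * G + 1)) with hηdef
  have hη0 : 0 < η := by positivity
  refine ⟨η, hη0, ?_⟩
  intro g hg hgη θb vb hvb hode h0 T hT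
  -- the trajectory derivative
  set w : ℝ → EuclideanSpace ℝ (Fin n) := fun u =>
    (EuclideanSpace.equiv (Fin n) ℝ).symm
      (fun i => -k * g (θb u) i / (Real.sqrt (vb u i) + ε)) with hwdef
  have hw : ∀ u i, w u i = -k * g (θb u) i / (Real.sqrt (vb u i) + ε) := fun u i => rfl
  have hf : ∀ u, 0 ≤ u →
      HasDerivAt (fun s => J (θb s)) (∑ i, gradient J (θb u) i * w u i) u := by
    intro u hu
    have hθ' : HasDerivAt θb (w u) u := aux_hasDerivAt_coords θb _ u (hode u hu)
    have := (hJ.differentiable one_ne_zero (θb u)).hasFDerivAt.comp_hasDerivAt u hθ'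
    rwa [aux_fderiv_eq J (θb u) (w u)] at this
  -- the key negativity estimate on the level set
  have key : ∀ u, 0 ≤ u → J (θb u) - J θs = c →
      (∑ i, gradient J (θb u) i * w u i) < 0 := by
    intro u hu hlev
    set a : EuclideanSpace ℝ (Fin n) := gradient J (θb u) with hadef
    have hterm : ∀ i : Fin n, a i * w u i ≤ -(k * a i ^ 2) / B + k * η * |a i| / ε := by
      intro i
      set s := Real.sqrt (vb u i) + ε with hsdef
      have hs0 : 0 < s := by positivity
      have hsε : ε ≤ s := le_add_of_nonneg_left (Real.sqrt_nonneg _)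
      have hsB : s ≤ B := add_le_add_left (Real.sqrt_le_sqrt (hvb u hu i).2) ε
      set e := g (θb u) i - a i with hedef
      have heη : |e| ≤ η := hgη (θb u) (le_of_eq hlev) i
      have hsplit : a i * w u i = -(k * a i ^ 2) / s + -(k * (a i * e)) / s := by
        rw [hw u i, hedef]; ring
      rw [hsplit]
      have e1 : -(k * a i ^ 2) / s ≤ -(k * a i ^ 2) / B := by
        rw [neg_div, neg_div, neg_le_neg_iff]
        gcongr
      have e2 : -(k * (a i * e)) / s ≤ k * η * |a i| / ε := by
        have hnum : -(k * (a i * e)) ≤ k * η * |a i| := by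
          calc -(k * (a i * e)) ≤ |k * (a i * e)| := neg_le_abs _
            _ = k * (|a i| * |e|) := by rw [abs_mul, abs_mul, abs_of_pos hk]
            _ ≤ k * (|a i| * η) := by gcongr
            _ = k * η * |a i| := by ring
        calc -(k * (a i * e)) / s ≤ (k * η * |a i|) / s := by gcongr
          _ ≤ (k * η * |a i|) / ε := by
              apply div_le_div_of_nonneg_left (by positivity) hε hsε
      linarith
    have hsum : (∑ i, a i * w u i) ≤
        -(k * ∑ i, a i ^ 2) / B + k * η * (∑ i, |a i|) / ε := by
      calc (∑ i, a i * w u i) ≤ ∑ i, (-(k * a i ^ 2) / B + k * η * |a i| / ε) :=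
            Finset.sum_le_sum fun i _ => hterm i
        _ = -(k * ∑ i, a i ^ 2) / B + k * η * (∑ i, |a i|) / ε := by
            rw [Finset.sum_add_distrib, ← Finset.sum_div, ← Finset.sum_div]
            congr 1
            · rw [Finset.sum_neg_distrib, ← Finset.mul_sum]
            · rw [← Finset.mul_sum]
    have hnorm : δ ≤ ‖a‖ := hδ (θb u) hlev
    have hP : δ ^ 2 ≤ ∑ i, a i ^ 2 := by
      rw [aux_sumsq a]
      exact pow_le_pow_left₀ hδ0.le hnorm 2
    have hQ : (∑ i, |a i|) ≤ n * G := by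
      calc (∑ i, |a i|) ≤ ∑ _i : Fin n, G := by
            apply Finset.sum_le_sum
            intro i _
            exact le_trans (aux_coord a i) (hGb (θb u) (le_of_eq hlev))
        _ = n * G := by simp [mul_comm]
    have hQ0 : (0:ℝ) ≤ ∑ i, |a i| := Finset.sum_nonneg fun i _ => abs_nonneg _
    have h1 : k * η * (∑ i, |a i|) / ε ≤ k * δ ^ 2 / (2 * B) := by
      have hnG1 : (0:ℝ) < n * G + 1 := by positivity
      have hQQ : (∑ i, |a i|) ≤ n * G + 1 := le_trans hQ (by linarith)
      rw [hηdef, div_le_div_iff₀ hε (by positivity)]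
      rw [← mul_div_assoc, div_mul_eq_mul_div, div_mul_eq_mul_div,
        div_le_iff₀ (by positivity)]
      nlinarith [mul_nonneg (by positivity : (0:ℝ) ≤ k * δ ^ 2 * ε * (2 * B))
        (sub_nonneg.2 hQQ)]
    have h2 : -(k * ∑ i, a i ^ 2) / B ≤ -(k * δ ^ 2) / B := by
      rw [neg_div, neg_div, neg_le_neg_iff]
      gcongr
    have h3 : -(k * δ ^ 2) / B + k * δ ^ 2 / (2 * B) < 0 := by
      have h5 : k * δ ^ 2 / (2 * B) < k * δ ^ 2 / B :=
        div_lt_div_of_pos_left (by positivity) hB (by linarith)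
      have h6 : -(k * δ ^ 2) / B = -(k * δ ^ 2 / B) := neg_div _ _
      linarith
    calc (∑ i, a i * w u i) ≤ -(k * ∑ i, a i ^ 2) / B + k * η * (∑ i, |a i|) / ε := hsum
      _ ≤ -(k * δ ^ 2) / B + k * δ ^ 2 / (2 * B) := by linarith
      _ < 0 := h3
  -- forward invariance by a first-crossing argument
  by_contra hcon
  push_neg at hcon
  set f : ℝ → ℝ := fun s => J (θb s) with hfdef
  have hfc : ContinuousOn f (Set.Icc 0 T) :=
    fun u hu => ((hf u hu.1).continuousAt.continuousWithinAt)
  set A : Set ℝ := Set.Icc 0 T ∩ f ⁻¹' Set.Iic (J θs + c) with hAdef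
  have hAcl : IsClosed A := hfc.preimage_isClosed_of_isClosed isClosed_Icc isClosed_Iic
  have hAne : (0:ℝ) ∈ A := ⟨⟨le_rfl, hT⟩, by simp only [Set.mem_preimage, Set.mem_Iic]; linarith⟩
  have hAbdd : BddAbove A := ⟨T, fun u hu => hu.1.2⟩
  set t₁ := sSup A with ht₁def
  have ht₁A : t₁ ∈ A := hAcl.csSup_mem ⟨0, hAne⟩ hAbdd
  have ht₁0 : 0 ≤ t₁ := ht₁A.1.1
  have ht₁T : t₁ ≤ T := ht₁A.1.2
  have hft₁ : f t₁ ≤ J θs + c := ht₁A.2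
  have ht₁ltT : t₁ < T := by
    rcases lt_or_eq_of_le ht₁T with h | h
    · exact h
    · exfalso; rw [h] at hft₁; simp only [hfdef] at hft₁; linarith
  -- f t₁ = J θs + c by IVT
  have hfeq : f t₁ = J θs + c := by
    have hsub : Set.Icc t₁ T ⊆ Set.Icc 0 T := Set.Icc_subset_Icc ht₁0 le_rfl
    have hmem : J θs + c ∈ Set.Icc (f t₁) (f T) := ⟨hft₁, by simp only [hfdef]; linarith⟩
    obtain ⟨s, hs, hfs⟩ := intermediate_value_Icc ht₁T (hfc.mono hsub) hmem
    have hsA : s ∈ A := ⟨⟨le_trans ht₁0 hs.1, hs.2⟩, by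
      show f s ≤ J θs + c
      exact le_of_eq hfs⟩
    have : s ≤ t₁ := le_csSup hAbdd hsA
    have hst : s = t₁ := le_antisymm this hs.1
    rw [← hst]; exact hfs
  -- derivative negative at t₁, so f decreases just after t₁
  have hlev : J (θb t₁) - J θs = c := by simp only [hfdef] at hfeq; linarith
  obtain ⟨u, hu1, hu2, hu3⟩ :=
    aux_decrease f _ t₁ T (hf t₁ ht₁0) (key t₁ ht₁0 hlev) ht₁ltT
  have huA : u ∈ A := ⟨⟨le_trans ht₁0 hu1.le, hu2.le⟩, by
    show f u ≤ J θs + c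
    rw [hfeq] at hu3
    linarith⟩
  have : u ≤ t₁ := le_csSup hAbdd huA
  linarith
end

section
/- Let J : ℝⁿ → ℝ be continuously differentiable. Fix pairwise distinct positive integers r_1,…,r_n, relative amplitudes α_1,…,α_n with α_i ≠ 0 and Σ_{i=1}^n α_i² = 1, and ω > 0 with period T = 2π/ω. For a_0 > 0 define s_i(t) = α_i a_0 sin(ω r_i t), m_i(t) = (2/(α_i a_0)) sin(ω r_i t), and the average gradient estimate ḡ_i(θ̂) = (1/T) ∫_0^T m_i(t) J(θ̂ + s(t)) dt. Then for every fixed θ̂ ∈ ℝⁿ and every i, ḡ_i(θ̂) → ∂J/∂θ_i(θ̂) as a_0 → 0⁺; that is, for every ε > 0 there exists δ > 0 such that for all a_0 ∈ (0, δ), |ḡ_i(θ̂) − ∂J/∂θ_i(θ̂)| < ε. -/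
open Real intervalIntegral

lemma h_int_cos (ω : ℝ) (hω : 0 < ω) (k : ℤ) :
    ∫ t in (0:ℝ)..(2 * Real.pi / ω), Real.cos (ω * (k:ℝ) * t) =
      if k = 0 then 2 * Real.pi / ω else 0 := by
  rcases eq_or_ne k 0 with hk | hk
  · simp [hk]
  · rw [if_neg hk]
    have hc : ω * (k:ℝ) ≠ 0 :=
      mul_ne_zero hω.ne' (Int.cast_ne_zero.mpr hk)
    have h1 : ∀ t : ℝ, Real.cos (ω * (k:ℝ) * t) = Real.cos ((ω * (k:ℝ)) * t) := by
      intro t; ring_nf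
    calc ∫ t in (0:ℝ)..(2 * Real.pi / ω), Real.cos (ω * (k:ℝ) * t)
        = (ω * (k:ℝ))⁻¹ • ∫ x in ((ω * (k:ℝ)) * 0)..((ω * (k:ℝ)) * (2 * Real.pi / ω)), Real.cos x := by
          rw [← intervalIntegral.integral_comp_mul_left (fun x => Real.cos x) hc]
      _ = 0 := by
          rw [integral_cos]
          have : (ω * (k:ℝ)) * (2 * Real.pi / ω) = ((2 * k : ℤ) : ℝ) * Real.pi := by
            push_cast; field_simp
          rw [mul_zero, this, Real.sin_int_mul_pi, Real.sin_zero, sub_zero, smul_eq_mul, mul_zero]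

lemma h_sin_mul_sin (a b : ℝ) :
    Real.sin a * Real.sin b = (Real.cos (a - b) - Real.cos (a + b)) / 2 := by
  rw [Real.cos_sub_cos]
  have h1 : (a - b + (a + b)) / 2 = a := by ring
  have h2 : (a - b - (a + b)) / 2 = -b := by ring
  rw [h1, h2, Real.sin_neg]; ring

lemma h_int_sinsin (ω : ℝ) (hω : 0 < ω) (p q : ℕ) (hp : 0 < p) (hq : 0 < q) :
    ∫ t in (0:ℝ)..(2 * Real.pi / ω), Real.sin (ω * (p:ℝ) * t) * Real.sin (ω * (q:ℝ) * t) =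
      if p = q then Real.pi / ω else 0 := by
  have hcongr : ∀ t : ℝ, Real.sin (ω * (p:ℝ) * t) * Real.sin (ω * (q:ℝ) * t) =
      (Real.cos (ω * (((p:ℤ) - q : ℤ):ℝ) * t) - Real.cos (ω * (((p:ℤ) + q : ℤ):ℝ) * t)) / 2 := by
    intro t
    rw [h_sin_mul_sin]
    congr 2 <;> push_cast <;> ring
  rw [intervalIntegral.integral_congr (g := fun t =>
      (Real.cos (ω * (((p:ℤ) - q : ℤ):ℝ) * t) - Real.cos (ω * (((p:ℤ) + q : ℤ):ℝ) * t)) / 2)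
      (fun t _ => hcongr t)]
  have hi1 : IntervalIntegrable (fun t => Real.cos (ω * (((p:ℤ) - q : ℤ):ℝ) * t))
      MeasureTheory.volume 0 (2 * Real.pi / ω) := by
    apply Continuous.intervalIntegrable; continuity
  have hi2 : IntervalIntegrable (fun t => Real.cos (ω * (((p:ℤ) + q : ℤ):ℝ) * t))
      MeasureTheory.volume 0 (2 * Real.pi / ω) := by
    apply Continuous.intervalIntegrable; continuity
  rw [intervalIntegral.integral_div, intervalIntegral.integral_sub hi1 hi2,
    h_int_cos ω hω, h_int_cos ω hω]
  have h2 : ((p:ℤ) + q) ≠ 0 := by positivity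
  rw [if_neg h2]
  rcases eq_or_ne p q with h | h
  · rw [if_pos (by omega), if_pos h]; field_simp; ring
  · rw [if_neg (by omega), if_neg h]; ring

lemma h_ftc {E : Type*} [NormedAddCommGroup E] [NormedSpace ℝ E]
    (J : E → ℝ) (hJ : ContDiff ℝ 1 J) (x v : E) :
    J (x + v) - J x = ∫ τ in (0:ℝ)..1, fderiv ℝ J (x + τ • v) v := by
  have hdiff : ∀ y : E, DifferentiableAt ℝ J y := fun y =>
    (hJ.differentiable one_ne_zero).differentiableAt
  have hderiv : ∀ τ : ℝ, HasDerivAt (fun σ : ℝ => J (x + σ • v))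
      (fderiv ℝ J (x + τ • v) v) τ := by
    intro τ
    have h1 : HasDerivAt (fun σ : ℝ => x + σ • v) v τ := by
      simpa using ((hasDerivAt_id τ).smul_const v).const_add x
    exact ((hdiff (x + τ • v)).hasFDerivAt.comp_hasDerivAt τ h1)
  have hcont : Continuous fun τ : ℝ => fderiv ℝ J (x + τ • v) v := by
    have h1 : Continuous fun τ : ℝ => fderiv ℝ J (x + τ • v) :=
      (hJ.continuous_fderiv one_ne_zero).comp (by continuity)
    exact h1.clm_apply continuous_const
  have := intervalIntegral.integral_eq_sub_of_hasDerivAt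
    (f := fun σ : ℝ => J (x + σ • v)) (a := 0) (b := 1)
    (fun τ _ => hderiv τ) (hcont.intervalIntegrable 0 1)
  simp only [zero_smul, one_smul, add_zero] at this
  rw [this]

lemma h_int_sin (ω : ℝ) (hω : 0 < ω) (k : ℕ) :
    ∫ t in (0:ℝ)..(2 * Real.pi / ω), Real.sin (ω * (k:ℝ) * t) = 0 := by
  rcases Nat.eq_zero_or_pos k with hk | hk
  · simp [hk]
  · have hc : ω * (k:ℝ) ≠ 0 := by positivity
    calc ∫ t in (0:ℝ)..(2 * Real.pi / ω), Real.sin (ω * (k:ℝ) * t)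
        = (ω * (k:ℝ))⁻¹ • ∫ x in ((ω * (k:ℝ)) * 0)..((ω * (k:ℝ)) * (2 * Real.pi / ω)), Real.sin x := by
          rw [← intervalIntegral.integral_comp_mul_left (fun x => Real.sin x) hc]
      _ = 0 := by
          rw [integral_sin]
          have : (ω * (k:ℝ)) * (2 * Real.pi / ω) = ((2 * k : ℤ) : ℝ) * Real.pi := by
            push_cast; field_simp
          rw [mul_zero, this, Real.cos_zero]
          have := Real.cos_int_mul_two_pi k
          rw [show ((2 * (k:ℤ) : ℤ) : ℝ) * Real.pi = (k:ℤ) * (2 * Real.pi) by push_cast; ring, this]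
          simp

/-- The average gradient estimate converges to the true partial derivative
as the dither amplitude `a₀` vanishes. -/
theorem average_gradient_estimate_converges (n : ℕ)
    (J : EuclideanSpace ℝ (Fin n) → ℝ)
    (hJ : ContDiff ℝ 1 J)
    (r : Fin n → ℕ) (hrpos : ∀ i, 0 < r i) (hrinj : Function.Injective r)
    (α : Fin n → ℝ) (hα : ∀ i, α i ≠ 0) (hαsum : ∑ i, (α i) ^ 2 = 1)
    (ω : ℝ) (hω : 0 < ω)
    (θh : EuclideanSpace ℝ (Fin n)) (i : Fin n) :
    ∀ ε : ℝ, 0 < ε → ∃ δ : ℝ, 0 < δ ∧ ∀ a0 : ℝ, 0 < a0 → a0 < δ →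
      |(1 / (2 * Real.pi / ω)) *
          (∫ t in (0:ℝ)..(2 * Real.pi / ω),
            (2 / (α i * a0)) * Real.sin (ω * (r i : ℝ) * t) *
              J (WithLp.toLp 2 (fun j => θh j + α j * a0 * Real.sin (ω * (r j : ℝ) * t))))
        - gradient J θh i| < ε := by
  intro ε hε
  have hT : (0:ℝ) < 2 * Real.pi / ω := by positivity
  set T : ℝ := 2 * Real.pi / ω with hTdef
  have hdiff : ∀ x, DifferentiableAt ℝ J x := fun x =>
    (hJ.differentiable one_ne_zero).differentiableAt
  set g : EuclideanSpace ℝ (Fin n) := gradient J θh with hgdef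
  have hkey : ∀ v : EuclideanSpace ℝ (Fin n), fderiv ℝ J θh v = ∑ j, g j * v j := by
    intro v
    have h1 : (inner ℝ g v : ℝ) = fderiv ℝ J θh v := InnerProductSpace.toDual_symm_apply
    rw [← h1, PiLp.inner_apply]
    simp [RCLike.inner_apply, mul_comm]
  have hαi : |α i| > 0 := abs_pos.mpr (hα i)
  set ε' : ℝ := ε * |α i| / 4 with hε'def
  have hε' : 0 < ε' := by positivity
  -- continuity of fderiv at θh
  have hC : ContinuousAt (fderiv ℝ J) θh := (hJ.continuous_fderiv one_ne_zero).continuousAt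
  obtain ⟨δ₁, hδ₁, hδ₁prop⟩ := Metric.continuousAt_iff.mp hC ε' hε'
  refine ⟨δ₁, hδ₁, ?_⟩
  intro a0 ha0 ha0δ
  set m : ℝ → ℝ := fun t => 2 / (α i * a0) * Real.sin (ω * (r i : ℝ) * t) with hmdef
  set s : ℝ → EuclideanSpace ℝ (Fin n) :=
    fun t => WithLp.toLp 2 (fun j => α j * a0 * Real.sin (ω * (r j : ℝ) * t)) with hsdef
  set w : ℝ → EuclideanSpace ℝ (Fin n) :=
    fun t => WithLp.toLp 2 (fun j => 2 * (α j / α i) *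
      (Real.sin (ω * (r i : ℝ) * t) * Real.sin (ω * (r j : ℝ) * t))) with hwdef
  have hconts : Continuous s := (PiLp.continuous_toLp 2 _).comp (continuous_pi fun j => by fun_prop)
  have hcontw : Continuous w := (PiLp.continuous_toLp 2 _).comp (continuous_pi fun j => by fun_prop)
  have hcontm : Continuous m := by fun_prop
  have hws : ∀ t, m t • s t = w t := by
    intro t; ext j
    show m t * (α j * a0 * Real.sin (ω * (r j : ℝ) * t)) = _
    simp only [hmdef, hwdef]
    field_simp [hα i, ha0.ne']
  have hsnorm : ∀ t, ‖s t‖ ≤ a0 := by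
    intro t
    rw [EuclideanSpace.norm_eq]
    have hb : ∑ j, ‖s t j‖ ^ 2 ≤ a0 ^ 2 := by
      calc ∑ j, ‖s t j‖ ^ 2 ≤ ∑ j, (α j)^2 * a0^2 := by
            apply Finset.sum_le_sum
            intro j _
            have h1 : ‖s t j‖^2 = (α j * a0 * Real.sin (ω * (r j : ℝ) * t))^2 := by
              rw [Real.norm_eq_abs, sq_abs]
            rw [h1]
            have := Real.sin_sq_le_one (ω * (r j : ℝ) * t)
            nlinarith [sq_nonneg (α j * a0)]
        _ = a0 ^ 2 := by rw [← Finset.sum_mul, hαsum, one_mul]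
    calc Real.sqrt (∑ j, ‖s t j‖ ^ 2) ≤ Real.sqrt (a0^2) := Real.sqrt_le_sqrt hb
      _ = a0 := by rw [Real.sqrt_sq ha0.le]
  have hmabs : ∀ t, |m t| ≤ 2 / (|α i| * a0) := by
    intro t
    simp only [hmdef]
    rw [abs_mul, abs_div, abs_mul]
    have h1 : |Real.sin (ω * (r i : ℝ) * t)| ≤ 1 := Real.abs_sin_le_one _
    have h2 : (0:ℝ) < |α i| * |a0| := by positivity
    calc |(2:ℝ)| / (|α i| * |a0|) * |Real.sin (ω * (r i : ℝ) * t)|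
        ≤ |(2:ℝ)| / (|α i| * |a0|) * 1 := by
          apply mul_le_mul_of_nonneg_left h1; positivity
      _ = 2 / (|α i| * a0) := by rw [mul_one, abs_of_pos ha0]; norm_num
  have hwnorm : ∀ t, ‖w t‖ ≤ 2 / |α i| := by
    intro t
    rw [← hws t, norm_smul, Real.norm_eq_abs]
    calc |m t| * ‖s t‖ ≤ (2 / (|α i| * a0)) * a0 := by
          apply mul_le_mul (hmabs t) (hsnorm t) (norm_nonneg _) (by positivity)
      _ = 2 / |α i| := by field_simp
  -- pointwise FTC identity
  have hfd : ∀ t, m t * (J (θh + s t) - J θh) =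
      ∫ τ in (0:ℝ)..1, fderiv ℝ J (θh + τ • s t) (w t) := by
    intro t
    have hptw : ∀ τ : ℝ, m t * fderiv ℝ J (θh + τ • s t) (s t) =
        fderiv ℝ J (θh + τ • s t) (w t) := by
      intro τ
      rw [← hws t, ContinuousLinearMap.map_smul, smul_eq_mul]
    rw [h_ftc J hJ θh (s t), ← intervalIntegral.integral_const_mul]
    simp only [hptw]
  -- continuity facts
  have hcJs : Continuous fun t => J (θh + s t) :=
    hJ.continuous.comp (continuous_const.add hconts)
  have hcf3 : Continuous fun t => fderiv ℝ J θh (w t) :=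
    (fderiv ℝ J θh).continuous.comp hcontw
  have hcf1 : Continuous fun t => m t * J (θh + s t) := hcontm.mul hcJs
  have hcf2 : Continuous fun t => m t * J θh := hcontm.mul continuous_const
  have hcf4 : Continuous fun t => m t * (J (θh + s t) - J θh) - fderiv ℝ J θh (w t) :=
    (hcontm.mul (hcJs.sub continuous_const)).sub hcf3
  -- split the main integral
  have hsplit : (∫ t in (0:ℝ)..T, m t * J (θh + s t)) =
      (∫ t in (0:ℝ)..T, m t * J θh) + ((∫ t in (0:ℝ)..T, fderiv ℝ J θh (w t)) +
        ∫ t in (0:ℝ)..T, (m t * (J (θh + s t) - J θh) - fderiv ℝ J θh (w t))) := by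
    rw [← intervalIntegral.integral_add (hcf3.intervalIntegrable 0 T)
      (hcf4.intervalIntegrable 0 T),
      ← intervalIntegral.integral_add (hcf2.intervalIntegrable 0 T)
      (by exact (hcf3.add hcf4).intervalIntegrable 0 T : IntervalIntegrable (fun t => fderiv ℝ J θh (w t) + (m t * (J (θh + s t) - J θh) - fderiv ℝ J θh (w t))) MeasureTheory.volume 0 T)]
    apply intervalIntegral.integral_congr
    intro t _; ring
  -- first piece vanishes
  have hI1 : (∫ t in (0:ℝ)..T, m t * J θh) = 0 := by
    have : (fun t => m t * J θh) =
        fun t => (2 / (α i * a0) * J θh) * Real.sin (ω * ((r i : ℕ):ℝ) * t) := by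
      funext t; simp only [hmdef]; ring
    rw [this, intervalIntegral.integral_const_mul, hTdef, h_int_sin ω hω (r i), mul_zero]
  -- second piece gives the gradient
  have hI2 : (∫ t in (0:ℝ)..T, fderiv ℝ J θh (w t)) = g i * T := by
    have h1 : ∀ t, fderiv ℝ J θh (w t) = ∑ j, g j * w t j := fun t => hkey (w t)
    rw [intervalIntegral.integral_congr (g := fun t => ∑ j, g j * w t j) (fun t _ => h1 t)]
    rw [intervalIntegral.integral_finset_sum]
    · have h2 : ∀ j : Fin n, (∫ t in (0:ℝ)..T, g j * w t j) =
          (g j * (2 * (α j / α i))) *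
            ∫ t in (0:ℝ)..T, Real.sin (ω * ((r i : ℕ):ℝ) * t) * Real.sin (ω * ((r j : ℕ):ℝ) * t) := by
        intro j
        rw [← intervalIntegral.integral_const_mul]
        apply intervalIntegral.integral_congr
        intro t _
        simp only [hwdef]; ring
      calc (∑ j, ∫ t in (0:ℝ)..T, g j * w t j)
          = ∑ j, (g j * (2 * (α j / α i))) *
              (if r i = r j then Real.pi / ω else 0) := by
            apply Finset.sum_congr rfl
            intro j _
            rw [h2 j, hTdef, h_int_sinsin ω hω (r i) (r j) (hrpos i) (hrpos j)]
        _ = g i * T := by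
            rw [Finset.sum_eq_single i]
            · rw [if_pos rfl, hTdef]
              field_simp [hα i, hω.ne']
            · intro j _ hj
              rw [if_neg (fun h => hj (hrinj h.symm)), mul_zero]
            · intro h; exact absurd (Finset.mem_univ i) h
    · intro j _
      exact (continuous_const.mul ((PiLp.continuous_apply 2 _ j).comp hcontw)).intervalIntegrable 0 T
  -- error bound for the third piece
  have hI3 : |∫ t in (0:ℝ)..T, (m t * (J (θh + s t) - J θh) - fderiv ℝ J θh (w t))| ≤
      (ε' * (2 / |α i|)) * T := by
    have hpt : ∀ t ∈ Set.uIoc (0:ℝ) T,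
        ‖m t * (J (θh + s t) - J θh) - fderiv ℝ J θh (w t)‖ ≤ ε' * (2 / |α i|) := by
      intro t _
      have hci : Continuous fun τ : ℝ => fderiv ℝ J (θh + τ • s t) (w t) :=
        ((hJ.continuous_fderiv one_ne_zero).comp
          (continuous_const.add (continuous_id.smul continuous_const))).clm_apply
          continuous_const
      have hrepr : m t * (J (θh + s t) - J θh) - fderiv ℝ J θh (w t) =
          ∫ τ in (0:ℝ)..1,
            (fderiv ℝ J (θh + τ • s t) (w t) - fderiv ℝ J θh (w t)) := by
        rw [intervalIntegral.integral_sub (hci.intervalIntegrable 0 1)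
          (intervalIntegrable_const), intervalIntegral.integral_const, ← hfd t]
        simp
      rw [hrepr]
      have hbound : ∀ τ ∈ Set.uIoc (0:ℝ) 1,
          ‖fderiv ℝ J (θh + τ • s t) (w t) - fderiv ℝ J θh (w t)‖ ≤ ε' * (2 / |α i|) := by
        intro τ hτ
        rw [Set.uIoc_of_le (by norm_num : (0:ℝ) ≤ 1)] at hτ
        have hdist : dist (θh + τ • s t) θh < δ₁ := by
          rw [dist_eq_norm, add_sub_cancel_left, norm_smul, Real.norm_eq_abs]
          calc |τ| * ‖s t‖ ≤ 1 * a0 := by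
                apply mul_le_mul _ (hsnorm t) (norm_nonneg _) zero_le_one
                rw [abs_of_pos hτ.1]; exact hτ.2
            _ = a0 := one_mul a0
            _ < δ₁ := ha0δ
        have h1 : ‖fderiv ℝ J (θh + τ • s t) - fderiv ℝ J θh‖ ≤ ε' := by
          rw [← dist_eq_norm]; exact (hδ₁prop hdist).le
        calc ‖fderiv ℝ J (θh + τ • s t) (w t) - fderiv ℝ J θh (w t)‖
            = ‖(fderiv ℝ J (θh + τ • s t) - fderiv ℝ J θh) (w t)‖ := by
              rw [ContinuousLinearMap.sub_apply]
          _ ≤ ‖fderiv ℝ J (θh + τ • s t) - fderiv ℝ J θh‖ * ‖w t‖ :=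
              ContinuousLinearMap.le_opNorm _ _
          _ ≤ ε' * (2 / |α i|) :=
              mul_le_mul h1 (hwnorm t) (norm_nonneg _) hε'.le
      calc ‖∫ τ in (0:ℝ)..1,
              (fderiv ℝ J (θh + τ • s t) (w t) - fderiv ℝ J θh (w t))‖
          ≤ (ε' * (2 / |α i|)) * |1 - 0| :=
            intervalIntegral.norm_integral_le_of_norm_le_const hbound
        _ = ε' * (2 / |α i|) := by norm_num
    calc |∫ t in (0:ℝ)..T, (m t * (J (θh + s t) - J θh) - fderiv ℝ J θh (w t))|
        ≤ (ε' * (2 / |α i|)) * |T - 0| :=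
          intervalIntegral.norm_integral_le_of_norm_le_const hpt
      _ = (ε' * (2 / |α i|)) * T := by rw [sub_zero, abs_of_pos hT]
  -- conclude
  show |1 / T * (∫ t in (0:ℝ)..T, m t * J (θh + s t)) - g i| < ε
  rw [hsplit, hI1, hI2]
  set E : ℝ := ∫ t in (0:ℝ)..T, (m t * (J (θh + s t) - J θh) - fderiv ℝ J θh (w t)) with hEdef
  have heq : 1 / T * (0 + (g i * T + E)) - g i = 1 / T * E := by
    field_simp
    ring
  rw [heq, abs_mul, abs_of_pos (by positivity : (0:ℝ) < 1 / T)]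
  have hfin : 1 / T * |E| ≤ ε / 2 := by
    have h2 : ε' * (2 / |α i|) = ε / 2 := by
      rw [hε'def]; field_simp; ring
    calc 1 / T * |E| ≤ 1 / T * ((ε' * (2 / |α i|)) * T) := by
          apply mul_le_mul_of_nonneg_left hI3 (by positivity)
      _ = ε' * (2 / |α i|) := by field_simp
      _ = ε / 2 := h2
  linarith
end

section
/- Let J : ℝⁿ → ℝ be continuously differentiable and let θ_0 ∈ ℝⁿ satisfy ∇J(θ_0) = 0. Fix pairwise distinct positive integers r_1,…,r_n, relative amplitudes α_1,…,α_n with α_i ≠ 0 and Σ_{i=1}^n α_i² = 1, and ω > 0 with period T = 2π/ω. For a_0 > 0 define s_i(t) = α_i a_0 sin(ω r_i t), m_i(t) = (2/(α_i a_0)) sin(ω r_i t), the average cost J̄(θ_0) = (1/T) ∫_0^T J(θ_0 + s(t)) dt, and the average squared gradient estimate ḡ²_i(θ_0, J̄(θ_0)) = (1/T) ∫_0^T ( m_i(t) ( J(θ_0 + s(t)) − J̄(θ_0) ) )² dt. Then for every i, ḡ²_i(θ_0, J̄(θ_0)) → 0 as a_0 → 0⁺. -/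
/-- At a stationary point `θ₀` of `J`, the average squared gradient estimate
(evaluated with the washout state at the average cost) tends to `0` as the dither
amplitude `a₀` vanishes. -/
theorem average_squared_gradient_estimate_vanishes (n : ℕ)
    (J : EuclideanSpace ℝ (Fin n) → ℝ)
    (hJ : ContDiff ℝ 1 J)
    (θ0 : EuclideanSpace ℝ (Fin n)) (hθ0 : gradient J θ0 = 0)
    (r : Fin n → ℕ) (hrpos : ∀ i, 0 < r i) (hrinj : Function.Injective r)
    (α : Fin n → ℝ) (hα : ∀ i, α i ≠ 0) (hαsum : ∑ i, (α i) ^ 2 = 1)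
    (ω : ℝ) (hω : 0 < ω) (i : Fin n) :
    ∀ ε : ℝ, 0 < ε → ∃ δ : ℝ, 0 < δ ∧ ∀ a0 : ℝ, 0 < a0 → a0 < δ →
      |(1 / (2 * Real.pi / ω)) *
          (∫ t in (0:ℝ)..(2 * Real.pi / ω),
            ((2 / (α i * a0)) * Real.sin (ω * (r i : ℝ) * t) *
              (J (WithLp.toLp 2 (fun j => θ0 j + α j * a0 * Real.sin (ω * (r j : ℝ) * t))) -
                (1 / (2 * Real.pi / ω)) *
                  (∫ u in (0:ℝ)..(2 * Real.pi / ω),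
                    J (WithLp.toLp 2 (fun j => θ0 j + α j * a0 * Real.sin (ω * (r j : ℝ) * u)))))) ^ 2)| < ε := by
  intro ε hε
  have hπ := Real.pi_pos
  set T : ℝ := 2 * Real.pi / ω with hTdef
  have hTpos : 0 < T := by positivity
  have hαi : (0:ℝ) < |α i| := abs_pos.mpr (hα i)
  have hsε : 0 < Real.sqrt ε := Real.sqrt_pos.mpr hε
  set c : ℝ := |α i| * Real.sqrt ε / 5 with hcdef
  have hc : 0 < c := by positivity
  -- fderiv is zero
  have hdiff : DifferentiableAt ℝ J θ0 := (hJ.differentiable one_ne_zero).differentiableAt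
  have hf0 : fderiv ℝ J θ0 = 0 := by
    have h : (InnerProductSpace.toDual ℝ (EuclideanSpace ℝ (Fin n))).symm (fderiv ℝ J θ0) = 0 :=
      hθ0
    have := congrArg (InnerProductSpace.toDual ℝ (EuclideanSpace ℝ (Fin n))) h
    simpa using this
  have hfd : HasFDerivAt J (0 : EuclideanSpace ℝ (Fin n) →L[ℝ] ℝ) θ0 := hf0 ▸ hdiff.hasFDerivAt
  have hlo := hfd.isLittleO
  rw [Asymptotics.isLittleO_iff] at hlo
  have hev := hlo hc
  simp only [ContinuousLinearMap.zero_apply, sub_zero] at hev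
  rw [Metric.eventually_nhds_iff] at hev
  obtain ⟨δ, hδ, hball⟩ := hev
  refine ⟨δ, hδ, ?_⟩
  intro a0 ha0 ha0δ
  -- the dithered point
  set X : ℝ → EuclideanSpace ℝ (Fin n) :=
    fun t => WithLp.toLp 2 (fun j => θ0 j + α j * a0 * Real.sin (ω * (r j : ℝ) * t)) with hXdef
  have hXsub : ∀ t : ℝ, X t - θ0 =
      (WithLp.toLp 2 (fun j => α j * a0 * Real.sin (ω * (r j : ℝ) * t)) : EuclideanSpace ℝ (Fin n)) := by
    intro t
    ext j
    show θ0 j + α j * a0 * Real.sin (ω * (r j : ℝ) * t) - θ0 j = _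
    ring
  have hXnorm : ∀ t : ℝ, ‖X t - θ0‖ ≤ a0 := by
    intro t
    rw [hXsub t, EuclideanSpace.norm_eq]
    have hb : ∑ j, ‖α j * a0 * Real.sin (ω * (r j : ℝ) * t)‖ ^ 2 ≤ a0 ^ 2 := by
      have h1 : ∀ j ∈ Finset.univ, ‖α j * a0 * Real.sin (ω * (r j : ℝ) * t)‖ ^ 2
          ≤ (α j) ^ 2 * a0 ^ 2 := by
        intro j _
        have hs : Real.sin (ω * (r j : ℝ) * t) ^ 2 ≤ 1 := Real.sin_sq_le_one _
        rw [Real.norm_eq_abs, sq_abs]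
        nlinarith [sq_nonneg (α j * a0)]
      calc ∑ j, ‖α j * a0 * Real.sin (ω * (r j : ℝ) * t)‖ ^ 2
          ≤ ∑ j, (α j) ^ 2 * a0 ^ 2 := Finset.sum_le_sum h1
        _ = a0 ^ 2 := by rw [← Finset.sum_mul, hαsum, one_mul]
    calc Real.sqrt (∑ j, ‖α j * a0 * Real.sin (ω * (r j : ℝ) * t)‖ ^ 2)
        ≤ Real.sqrt (a0 ^ 2) := Real.sqrt_le_sqrt hb
      _ = a0 := Real.sqrt_sq ha0.le
  -- pointwise bound on J
  have hJb : ∀ t : ℝ, |J (X t) - J θ0| ≤ c * a0 := by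
    intro t
    have h2 : dist (X t) θ0 < δ := by
      rw [dist_eq_norm]; exact lt_of_le_of_lt (hXnorm t) ha0δ
    have h3 := hball h2
    rw [Real.norm_eq_abs] at h3
    calc |J (X t) - J θ0| ≤ c * ‖X t - θ0‖ := h3
      _ ≤ c * a0 := mul_le_mul_of_nonneg_left (hXnorm t) hc.le
  -- continuity of J ∘ X
  have hXcont : Continuous X := by
    have hg : Continuous fun t : ℝ => (fun j => θ0 j + α j * a0 * Real.sin (ω * (r j : ℝ) * t) :
        Fin n → ℝ) := by
      apply continuous_pi
      intro j
      fun_prop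
    exact (PiLp.continuous_toLp 2 (fun _ : Fin n => ℝ)).comp hg
  have hJXcont : Continuous fun t => J (X t) := hJ.continuous.comp hXcont
  -- the average cost
  set Jbar : ℝ := (1 / T) * ∫ u in (0:ℝ)..T, J (X u) with hJbardef
  have hJbarb : |Jbar - J θ0| ≤ c * a0 := by
    have hint : IntervalIntegrable (fun u => J (X u)) MeasureTheory.volume 0 T :=
      hJXcont.intervalIntegrable 0 T
    have hconst : IntervalIntegrable (fun _ : ℝ => J θ0) MeasureTheory.volume 0 T :=
      intervalIntegrable_const
    have h4 : ∫ u in (0:ℝ)..T, (J (X u) - J θ0) =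
        (∫ u in (0:ℝ)..T, J (X u)) - T * J θ0 := by
      rw [intervalIntegral.integral_sub hint hconst, intervalIntegral.integral_const,
        smul_eq_mul]
      ring
    have h5 : ‖∫ u in (0:ℝ)..T, (J (X u) - J θ0)‖ ≤ (c * a0) * |T - 0| := by
      apply intervalIntegral.norm_integral_le_of_norm_le_const
      intro x _
      rw [Real.norm_eq_abs]
      exact hJb x
    rw [h4, Real.norm_eq_abs] at h5
    have h6 : Jbar - J θ0 = (1 / T) * ((∫ u in (0:ℝ)..T, J (X u)) - T * J θ0) := by
      rw [hJbardef]; field_simp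
    rw [h6, abs_mul, abs_of_pos (by positivity : (0:ℝ) < 1 / T)]
    have h7 : |T - 0| = T := by rw [sub_zero, abs_of_pos hTpos]
    rw [h7] at h5
    calc (1 / T) * |(∫ u in (0:ℝ)..T, J (X u)) - T * J θ0| ≤ (1 / T) * ((c * a0) * T) := by
          apply mul_le_mul_of_nonneg_left h5 (by positivity)
      _ = c * a0 := by field_simp
  -- bound the integrand
  set C : ℝ := 16 * c ^ 2 / (α i) ^ 2 with hCdef
  have hbound : ∀ t : ℝ,
      ‖((2 / (α i * a0)) * Real.sin (ω * (r i : ℝ) * t) * (J (X t) - Jbar)) ^ 2‖ ≤ C := by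
    intro t
    have hD : |J (X t) - Jbar| ≤ 2 * (c * a0) := by
      calc |J (X t) - Jbar| = |(J (X t) - J θ0) + (J θ0 - Jbar)| := by ring_nf
        _ ≤ |J (X t) - J θ0| + |J θ0 - Jbar| := abs_add_le _ _
        _ ≤ c * a0 + c * a0 := by
            refine add_le_add (hJb t) ?_
            rw [abs_sub_comm]; exact hJbarb
        _ = 2 * (c * a0) := by ring
    have hs : Real.sin (ω * (r i : ℝ) * t) ^ 2 ≤ 1 := Real.sin_sq_le_one _
    rw [Real.norm_eq_abs, abs_of_nonneg (sq_nonneg _)]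
    have hD2 : (J (X t) - Jbar) ^ 2 ≤ (2 * (c * a0)) ^ 2 := by
      rw [← sq_abs]
      exact pow_le_pow_left₀ (abs_nonneg _) hD 2
    have hA : (2 / (α i * a0)) ^ 2 = 4 / ((α i) ^ 2 * a0 ^ 2) := by
      rw [div_pow, mul_pow]; norm_num
    have key : ((2 / (α i * a0)) * Real.sin (ω * (r i : ℝ) * t) * (J (X t) - Jbar)) ^ 2
        = (2 / (α i * a0)) ^ 2 * (Real.sin (ω * (r i : ℝ) * t) ^ 2 * (J (X t) - Jbar) ^ 2) := by
      ring
    rw [key, hA]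
    have hαi2 : (0:ℝ) < (α i) ^ 2 := sq_abs (α i) ▸ pow_pos hαi 2
    have ha0' : a0 ≠ 0 := ne_of_gt ha0
    have hpos : (0:ℝ) < 4 / ((α i) ^ 2 * a0 ^ 2) := by positivity
    have h8 : Real.sin (ω * (r i : ℝ) * t) ^ 2 * (J (X t) - Jbar) ^ 2 ≤ (2 * (c * a0)) ^ 2 := by
      calc Real.sin (ω * (r i : ℝ) * t) ^ 2 * (J (X t) - Jbar) ^ 2
          ≤ 1 * (J (X t) - Jbar) ^ 2 := by
            apply mul_le_mul_of_nonneg_right hs (sq_nonneg _)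
        _ = (J (X t) - Jbar) ^ 2 := one_mul _
        _ ≤ (2 * (c * a0)) ^ 2 := hD2
    calc 4 / ((α i) ^ 2 * a0 ^ 2) * (Real.sin (ω * (r i : ℝ) * t) ^ 2 * (J (X t) - Jbar) ^ 2)
        ≤ 4 / ((α i) ^ 2 * a0 ^ 2) * (2 * (c * a0)) ^ 2 :=
          mul_le_mul_of_nonneg_left h8 hpos.le
      _ = C := by rw [hCdef]; field_simp [hα i, ha0']; ring
  -- assemble
  have hint2 : ‖∫ t in (0:ℝ)..T,
      ((2 / (α i * a0)) * Real.sin (ω * (r i : ℝ) * t) * (J (X t) - Jbar)) ^ 2‖ ≤ C * |T - 0| :=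
    intervalIntegral.norm_integral_le_of_norm_le_const fun t _ => hbound t
  rw [Real.norm_eq_abs, sub_zero, abs_of_pos hTpos] at hint2
  have hCε : C < ε := by
    have hαi2 : (0:ℝ) < (α i) ^ 2 := sq_abs (α i) ▸ pow_pos hαi 2
    have hc2 : c ^ 2 = (α i) ^ 2 * ε / 25 := by
      rw [hcdef, div_pow, mul_pow, sq_abs, Real.sq_sqrt hε.le]
      norm_num
    rw [hCdef, hc2]
    rw [div_lt_iff₀ hαi2]
    calc 16 * ((α i) ^ 2 * ε / 25) = (16 / 25) * ε * (α i) ^ 2 := by ring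
      _ < ε * (α i) ^ 2 := by nlinarith
  calc |(1 / T) * ∫ t in (0:ℝ)..T,
        ((2 / (α i * a0)) * Real.sin (ω * (r i : ℝ) * t) * (J (X t) - Jbar)) ^ 2|
      = (1 / T) * |∫ t in (0:ℝ)..T,
        ((2 / (α i * a0)) * Real.sin (ω * (r i : ℝ) * t) * (J (X t) - Jbar)) ^ 2| := by
        rw [abs_mul, abs_of_pos (by positivity : (0:ℝ) < 1 / T)]
    _ ≤ (1 / T) * (C * T) := mul_le_mul_of_nonneg_left hint2 (by positivity)
    _ = C := by field_simp
    _ < ε := hCε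
end

section
/- Let J : ℝⁿ → ℝ be continuously differentiable, coercive (J(θ) → ∞ as ‖θ‖ → ∞), with a unique global minimizer θ* (J(θ*) < J(θ) for all θ ≠ θ*) and ∇J(θ) = 0 if and only if θ = θ*. Let f : ℝⁿ → ℝ be continuous and define, for c ≥ 0, r(c) = max{ |f(θ)| : θ ∈ ℝⁿ, J(θ) − J(θ*) ≤ c }. Then r is well defined (the maximum is attained), monotone nondecreasing, and continuous on [0, ∞). -/
open Set Filter Topology

/-- The bounding-ball radius `r(c) = max {|f(θ)| : J(θ) - J(θ*) ≤ c}` is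
well defined (the maximum is attained), monotone nondecreasing, and continuous on
`[0, ∞)`. -/
theorem bounding_ball_radius (n : ℕ)
    (J : EuclideanSpace ℝ (Fin n) → ℝ) (θs : EuclideanSpace ℝ (Fin n))
    (hJ : ContDiff ℝ 1 J)
    (hmin : ∀ θ, θ ≠ θs → J θs < J θ)
    (hgrad : ∀ θ, gradient J θ = 0 ↔ θ = θs)
    (hcoercive : ∀ M : ℝ, ∃ R : ℝ, ∀ θ : EuclideanSpace ℝ (Fin n), R ≤ ‖θ‖ → M ≤ J θ)
    (f : EuclideanSpace ℝ (Fin n) → ℝ) (hf : Continuous f) :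
    ∃ r : ℝ → ℝ,
      (∀ c : ℝ, 0 ≤ c →
        (∃ θ : EuclideanSpace ℝ (Fin n), J θ - J θs ≤ c ∧ |f θ| = r c) ∧
        (∀ θ : EuclideanSpace ℝ (Fin n), J θ - J θs ≤ c → |f θ| ≤ r c)) ∧
      MonotoneOn r (Set.Ici (0 : ℝ)) ∧
      ContinuousOn r (Set.Ici (0 : ℝ)) := by
  classical
  have hJcont : Continuous J := hJ.continuous
  have habs : Continuous fun θ : EuclideanSpace ℝ (Fin n) => |f θ| := hf.abs
  set K : ℝ → Set (EuclideanSpace ℝ (Fin n)) := fun c => {θ | J θ - J θs ≤ c} with hKdef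
  have hKclosed : ∀ c, IsClosed (K c) :=
    fun c => isClosed_le (by fun_prop) continuous_const
  have hKmono : ∀ {a b : ℝ}, a ≤ b → K a ⊆ K b := fun {a b} hab θ hθ => le_trans hθ hab
  have hKcpt : ∀ c, IsCompact (K c) := by
    intro c
    obtain ⟨R, hR⟩ := hcoercive (J θs + c + 1)
    have hbdd : Bornology.IsBounded (K c) := by
      apply Bornology.IsBounded.subset
        (Metric.isBounded_closedBall (x := (0 : EuclideanSpace ℝ (Fin n))) (r := |R|))
      intro θ hθ
      simp only [Metric.mem_closedBall, dist_zero_right]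
      by_contra h
      push_neg at h
      have h1 : R ≤ ‖θ‖ := (le_abs_self R).trans h.le
      have h2 := hR θ h1
      have h3 : J θ - J θs ≤ c := hθ
      linarith
    exact Metric.isCompact_of_isClosed_isBounded (hKclosed c) hbdd
  have hKne : ∀ {c : ℝ}, 0 ≤ c → (K c).Nonempty := fun {c} hc => ⟨θs, by simpa [hKdef] using hc⟩
  have hmax : ∀ c : ℝ, 0 ≤ c → ∃ θm, θm ∈ K c ∧ ∀ θ ∈ K c, |f θ| ≤ |f θm| := by
    intro c hc
    obtain ⟨θm, hθm, hm⟩ := (hKcpt c).exists_isMaxOn (hKne hc) habs.continuousOn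
    exact ⟨θm, hθm, fun θ hθ => hm hθ⟩
  choose Θ hΘmem hΘmax using hmax
  refine ⟨fun c => if hc : 0 ≤ c then |f (Θ c hc)| else 0, ?_, ?_, ?_⟩
  case _ =>
    intro c hc
    refine ⟨⟨Θ c hc, hΘmem c hc, ?_⟩, fun θ hθ => ?_⟩
    · simp [hc]
    · simpa [hc] using hΘmax c hc θ hθ
  case _ =>
    intro a ha b hb hab
    simp only [mem_Ici] at ha hb
    simp only [dif_pos ha, dif_pos hb]
    exact hΘmax b hb _ (hKmono hab (hΘmem a ha))
  case _ =>
    set r : ℝ → ℝ := fun c => if hc : 0 ≤ c then |f (Θ c hc)| else 0 with hrdef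
    have hrval : ∀ c (hc : 0 ≤ c), r c = |f (Θ c hc)| := fun c hc => dif_pos hc
    have hrub : ∀ c (hc : 0 ≤ c), ∀ θ ∈ K c, |f θ| ≤ r c := by
      intro c hc θ hθ; rw [hrval c hc]; exact hΘmax c hc θ hθ
    have hrmono : ∀ a b : ℝ, 0 ≤ a → a ≤ b → r a ≤ r b := by
      intro a b ha hab
      rw [hrval a ha, hrval b (ha.trans hab)]
      exact hΘmax b (ha.trans hab) _ (hKmono hab (hΘmem a ha))
    intro c0 hc0
    simp only [mem_Ici] at hc0
    rw [Metric.continuousWithinAt_iff]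
    intro ε hε
    -- Right estimate: ∃ δ1 > 0, ∀ c, 0 ≤ c → c ≤ c0 + δ1 → r c ≤ r c0 + ε/2
    have hright : ∃ δ1 > 0, δ1 ≤ 1 ∧ ∀ c, 0 ≤ c → c ≤ c0 + δ1 → r c ≤ r c0 + ε / 2 := by
      set S : Set (EuclideanSpace ℝ (Fin n)) :=
        K (c0 + 1) ∩ {θ | r c0 + ε / 2 ≤ |f θ|} with hSdef
      have hScl : IsClosed S := (hKclosed _).inter (isClosed_le continuous_const habs)
      have hScpt : IsCompact S := (hKcpt (c0 + 1)).of_isClosed_subset hScl inter_subset_left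
      have hSdisj : ∀ θ ∈ S, ¬ (θ ∈ K c0) := by
        intro θ hθ hθ0
        have h1 := hrub c0 hc0 θ hθ0
        have h2 : r c0 + ε / 2 ≤ |f θ| := hθ.2
        linarith
      rcases S.eq_empty_or_nonempty with hS | hS
      · refine ⟨1, one_pos, le_rfl, fun c hc hcle => ?_⟩
        rw [hrval c hc]
        have hmem : Θ c hc ∈ K (c0 + 1) := hKmono hcle (hΘmem c hc)
        by_contra h
        push_neg at h
        have hin : Θ c hc ∈ S := ⟨hmem, h.le⟩
        rw [hS] at hin
        exact hin
      · obtain ⟨θ1, hθ1S, hθ1min⟩ := hScpt.exists_isMinOn hS hJcont.continuousOn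
        have hθ1gt : c0 < J θ1 - J θs := by
          by_contra h
          push_neg at h
          exact hSdisj θ1 hθ1S h
        set d := J θ1 - J θs - c0 with hd
        have hdpos : 0 < d := by simp only [hd]; linarith
        refine ⟨min 1 (d / 2), lt_min one_pos (by linarith), min_le_left _ _,
          fun c hc hcle => ?_⟩
        rw [hrval c hc]
        have hmem : Θ c hc ∈ K (c0 + 1) :=
          hKmono (hcle.trans (by simp)) (hΘmem c hc)
        by_contra h
        push_neg at h
        have hΘS : Θ c hc ∈ S := ⟨hmem, h.le⟩
        have h1 : J θ1 ≤ J (Θ c hc) := hθ1min hΘS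
        have h2 : J (Θ c hc) - J θs ≤ c := hΘmem c hc
        have h3 : c ≤ c0 + d / 2 := hcle.trans (by simp)
        linarith
    -- Left estimate
    have hleft : ∃ δ2 > 0, ∀ c, 0 ≤ c → c0 - δ2 < c → c ≤ c0 → r c0 - ε / 2 ≤ r c := by
      rcases eq_or_lt_of_le hc0 with hc0' | hc0'
      · refine ⟨1, one_pos, fun c hc _ hcle => ?_⟩
        have : c = c0 := le_antisymm hcle (hc0' ▸ hc)
        rw [this]
        linarith
      · -- c0 > 0
        set θ0 := Θ c0 hc0 with hθ0
        have hθ0mem : J θ0 - J θs ≤ c0 := hΘmem c0 hc0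
        have key : ∃ θ', J θ' - J θs < c0 ∧ r c0 - ε / 2 ≤ |f θ'| := by
          rcases lt_or_eq_of_le hθ0mem with hlt | heq
          · exact ⟨θ0, hlt, by rw [hrval c0 hc0]; linarith [abs_nonneg (f θ0)]⟩
          · -- J θ0 - J θs = c0 > 0, so θ0 ≠ θs and the gradient is nonzero
            have hne : θ0 ≠ θs := by
              intro h; rw [h] at heq; simp at heq; linarith
            have hg : gradient J θ0 ≠ 0 := fun h => hne ((hgrad θ0).mp h)
            set g := gradient J θ0 with hgdef
            -- continuity of f at θ0
            obtain ⟨η, hη, hfη⟩ := Metric.continuousAt_iff.mp hf.continuousAt (ε / 2)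
              (by linarith)
            -- derivative of J along -g at θ0 is negative
            have hdiff : DifferentiableAt ℝ J θ0 :=
              (hJ.differentiable one_ne_zero).differentiableAt
            have hGrad : HasGradientAt J g θ0 := hdiff.hasGradientAt
            have hFD : HasFDerivAt J ((InnerProductSpace.toDual ℝ _) g) θ0 :=
              hGrad.hasFDerivAt
            set φ : ℝ → ℝ := fun t => J (θ0 + t • (-g)) with hφ
            have hcurve : HasDerivAt (fun t : ℝ => θ0 + t • (-g)) (-g) 0 := by
              simpa using ((hasDerivAt_id (0:ℝ)).smul_const (-g)).const_add θ0
            have hFD' : HasFDerivAt J ((InnerProductSpace.toDual ℝ _) g)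
                ((fun t : ℝ => θ0 + t • (-g)) 0) := by
              rw [show (fun t : ℝ => θ0 + t • (-g)) 0 = θ0 by simp]
              exact hFD
            have hφderiv : HasDerivAt φ (((InnerProductSpace.toDual ℝ _) g) (-g)) 0 := by
              have := HasFDerivAt.comp_hasDerivAt (x := (0:ℝ))
                (f := fun t : ℝ => θ0 + t • (-g)) hFD' hcurve
              simpa [hφ, Function.comp_def] using this
            have hdval : ((InnerProductSpace.toDual ℝ _) g) (-g) = -‖g‖ ^ 2 := by
              rw [InnerProductSpace.toDual_apply_apply, inner_neg_right,
                real_inner_self_eq_norm_sq]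
            rw [hdval] at hφderiv
            have hdneg : -‖g‖ ^ 2 < 0 := by
              have : 0 < ‖g‖ := norm_pos_iff.mpr hg
              nlinarith
            -- slope is eventually negative near 0
            have hslope := hasDerivAt_iff_tendsto_slope.mp hφderiv
            have hev : ∀ᶠ t in 𝓝[≠] (0:ℝ), slope φ 0 t < 0 :=
              hslope (Iio_mem_nhds hdneg)
            have hev' : ∀ᶠ t in 𝓝[>] (0:ℝ), slope φ 0 t < 0 :=
              hev.filter_mono (nhdsWithin_mono 0 (fun t ht => ne_of_gt ht))
            have hsmall : ∀ᶠ t in 𝓝[>] (0:ℝ), ‖t • (-g)‖ < η := by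
              have : Tendsto (fun t : ℝ => ‖t • (-g)‖) (𝓝[>] 0) (𝓝 0) := by
                have : Tendsto (fun t : ℝ => ‖t • (-g)‖) (𝓝 0) (𝓝 ‖(0:ℝ) • (-g)‖) :=
                  ((continuous_id.smul continuous_const).norm).tendsto 0
                simpa using this.mono_left nhdsWithin_le_nhds
              exact this.eventually (eventually_lt_nhds hη) |>.mono (by simp)
            obtain ⟨t, ⟨htneg, htη⟩, htpos⟩ :=
              ((hev'.and hsmall).and self_mem_nhdsWithin).exists
            have htpos : (0:ℝ) < t := htpos
            have hφt : φ t < φ 0 := by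
              have := htneg
              rw [slope_def_field] at this
              have h0 : (φ t - φ 0) / (t - 0) < 0 := by
                simpa [div_eq_inv_mul, sub_zero] using this
              have := (div_neg_iff.mp h0)
              rcases this with ⟨h1, h2⟩ | ⟨h1, h2⟩
              · linarith
              · linarith
            have hφ0 : φ 0 = J θ0 := by simp [hφ]
            refine ⟨θ0 + t • (-g), ?_, ?_⟩
            · have : J (θ0 + t • (-g)) < J θ0 := by rw [← hφ0]; exact hφt
              linarith [this]
            · have hdist : dist (θ0 + t • (-g)) θ0 < η := by
                simpa [dist_eq_norm] using htη
              have := hfη hdist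
              have habs' : |f (θ0 + t • (-g))| ≥ |f θ0| - ε / 2 := by
                have h1 : |(|f (θ0 + t • (-g))| - |f θ0|)| ≤ |f (θ0 + t • (-g)) - f θ0| :=
                  abs_abs_sub_abs_le_abs_sub _ _
                rw [Real.dist_eq] at this
                have := abs_lt.mp (lt_of_le_of_lt h1 this)
                linarith [this.1]
              rw [hrval c0 hc0]
              linarith
        obtain ⟨θ', hθ'lt, hθ'f⟩ := key
        refine ⟨c0 - (J θ' - J θs), by linarith, fun c hc hcgt _ => ?_⟩
        have hθ'K : θ' ∈ K c := by
          show J θ' - J θs ≤ c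
          linarith
        linarith [hrub c hc θ' hθ'K]
    obtain ⟨δ1, hδ1, _, hδ1p⟩ := hright
    obtain ⟨δ2, hδ2, hδ2p⟩ := hleft
    refine ⟨min δ1 δ2, lt_min hδ1 hδ2, fun c hc hdist => ?_⟩
    simp only [mem_Ici] at hc
    rw [Real.dist_eq] at hdist ⊢
    have hd1 : |c - c0| < δ1 := lt_of_lt_of_le hdist (min_le_left _ _)
    have hd2 : |c - c0| < δ2 := lt_of_lt_of_le hdist (min_le_right _ _)
    rcases le_total c c0 with h | h
    · have hlb := hδ2p c hc (by have := abs_lt.mp hd2; linarith) h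
      have hub := hrmono c c0 hc h
      have : |r c - r c0| ≤ ε / 2 := abs_le.mpr ⟨by linarith, by linarith⟩
      linarith
    · have hub := hδ1p c hc (by have := abs_lt.mp hd1; linarith)
      have hlb := hrmono c0 c hc0 h
      have : |r c - r c0| ≤ ε / 2 := abs_le.mpr ⟨by linarith, by linarith⟩
      linarith
end
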